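/- arXiv:2003.13341 — 2 statements merged into one kernel-verified Lean document; each statement's English description precedes it below -/
import Mathlib

section
/- Let T₀ be a strongly continuous semigroup on a Banach space X, with sun dual X^⊙ and sun-star dual X^⊙*, and let j : X → X^⊙* be the canonical embedding. For an interval J, the admissible forcing class F₀(J), consisting of continuous functions f : J → X^⊙* such that the weak* integral ∫ₛᵗ T₀^⊙*(t − τ) f(τ) dτ lies in jX for all s ≤ t in J, is a closed linear subspace of C(J, X^⊙*) with the topology of uniform convergence on compact subsets. -/
set_option maxHeartbeats 1000000
set_option synthInstance.maxHeartbeats 400000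

open MeasureTheory Set

lemma aux_cont {Xs : Type*} [NormedAddCommGroup Xs] [NormedSpace ℝ Xs]
    (Tss : ℝ → (Xs →L[ℝ] ℝ) →L[ℝ] (Xs →L[ℝ] ℝ))
    (hwscont : ∀ (v : Xs →L[ℝ] ℝ) (φ : Xs),
      ContinuousOn (fun t => (Tss t v) φ) (Set.Ici (0:ℝ)))
    {C s t : ℝ}
    (hC : ∀ τ ∈ Set.Icc s t, ‖Tss (t - τ)‖ ≤ C)
    (u : ℝ → (Xs →L[ℝ] ℝ)) (hu : ContinuousOn u (Set.Icc s t)) (φ : Xs) :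
    ContinuousOn (fun τ => (Tss (t - τ) (u τ)) φ) (Set.Icc s t) := by
  intro τ₀ hτ₀
  have hB : ContinuousWithinAt (fun τ => (Tss (t - τ) (u τ₀)) φ) (Set.Icc s t) τ₀ := by
    exact ((hwscont (u τ₀) φ).comp ((continuous_const.sub continuous_id).continuousOn)
      (fun τ hτ => sub_nonneg.2 hτ.2)) τ₀ hτ₀
  have hA : Filter.Tendsto (fun τ => (Tss (t - τ) (u τ - u τ₀)) φ)
      (nhdsWithin τ₀ (Set.Icc s t)) (nhds 0) := by
    apply squeeze_zero_norm' (a := fun τ => C * ‖u τ - u τ₀‖ * ‖φ‖)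
    · filter_upwards [self_mem_nhdsWithin] with τ hτ
      calc ‖(Tss (t - τ) (u τ - u τ₀)) φ‖
          ≤ ‖Tss (t - τ) (u τ - u τ₀)‖ * ‖φ‖ := (Tss (t - τ) (u τ - u τ₀)).le_opNorm φ
        _ ≤ (C * ‖u τ - u τ₀‖) * ‖φ‖ := by
            apply mul_le_mul_of_nonneg_right _ (norm_nonneg φ)
            calc ‖Tss (t - τ) (u τ - u τ₀)‖ ≤ ‖Tss (t - τ)‖ * ‖u τ - u τ₀‖ :=
                  (Tss (t - τ)).le_opNorm _
              _ ≤ C * ‖u τ - u τ₀‖ :=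
                  mul_le_mul_of_nonneg_right (hC τ hτ) (norm_nonneg _)
        _ = C * ‖u τ - u τ₀‖ * ‖φ‖ := by ring
    · have h1 : Filter.Tendsto (fun τ => ‖u τ - u τ₀‖)
          (nhdsWithin τ₀ (Set.Icc s t)) (nhds 0) := by
        have : ContinuousWithinAt (fun τ => ‖u τ - u τ₀‖) (Set.Icc s t) τ₀ :=
          ((hu τ₀ hτ₀).sub (continuousWithinAt_const (b := u τ₀))).norm
        unfold ContinuousWithinAt at this
        simpa using this
      have := (h1.const_mul C).mul_const ‖φ‖
      simpa using this
  have heq : ∀ τ : ℝ, (Tss (t - τ) (u τ)) φ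
      = (Tss (t - τ) (u τ - u τ₀)) φ + (Tss (t - τ) (u τ₀)) φ := by
    intro τ
    rw [map_sub, ContinuousLinearMap.sub_apply]
    ring
  have h2 := hA.add hB
  rw [zero_add] at h2
  have hfe : (fun τ => (Tss (t - τ) (u τ)) φ)
      = fun τ => (Tss (t - τ) (u τ - u τ₀)) φ + (Tss (t - τ) (u τ₀)) φ := funext heq
  unfold ContinuousWithinAt
  rw [hfe]
  convert h2 using 2
  simp


open Classical in
lemma aux_closed {X Xs : Type*} [NormedAddCommGroup X] [NormedSpace ℝ X]
    [NormedAddCommGroup Xs] [NormedSpace ℝ Xs]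
    (j : X →L[ℝ] (Xs →L[ℝ] ℝ)) (hjcl : IsClosed (Set.range j))
    (Tss : ℝ → (Xs →L[ℝ] ℝ) →L[ℝ] (Xs →L[ℝ] ℝ))
    (hwscont : ∀ (v : Xs →L[ℝ] ℝ) (φ : Xs),
      ContinuousOn (fun t => (Tss t v) φ) (Set.Ici (0:ℝ)))
    {C s t : ℝ} (hst : s ≤ t) (hC0 : 0 ≤ C)
    (hC : ∀ τ ∈ Set.Icc s t, ‖Tss (t - τ)‖ ≤ C)
    (J : Set ℝ) (hJss : Set.Icc s t ⊆ J) :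
    IsClosed {f : C(↥J, Xs →L[ℝ] ℝ) | ∃ x : X, ∀ φ : Xs,
      (j x) φ = ∫ τ in s..t,
        (Tss (t - τ) (if h : τ ∈ J then f ⟨τ, h⟩ else 0)) φ} := by
  classical
  set K : Set ↥J := {p : ↥J | (p : ℝ) ∈ Set.Icc s t} with hKdef
  have hKc : IsCompact K := by
    rw [Subtype.isCompact_iff]
    have himg : (Subtype.val '' K) = Set.Icc s t := by
      ext y
      constructor
      · rintro ⟨p, hp, rfl⟩; exact hp
      · intro hy; exact ⟨⟨y, hJss hy⟩, hy, rfl⟩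
    rw [himg]
    exact isCompact_Icc
  haveI : CompactSpace ↥K := isCompact_iff_compactSpace.mp hKc
  set E' : C(↥K, Xs →L[ℝ] ℝ) → ℝ → (Xs →L[ℝ] ℝ) :=
    fun g τ => if h : τ ∈ Set.Icc s t then g ⟨⟨τ, hJss h⟩, h⟩ else 0 with hE'def
  have hE'cont : ∀ g, ContinuousOn (E' g) (Set.Icc s t) := by
    intro g
    rw [continuousOn_iff_continuous_restrict]
    have hr : (Set.Icc s t).domRestrict (E' g)
        = fun x : ↥(Set.Icc s t) => g ⟨⟨x.1, hJss x.2⟩, x.2⟩ := by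
      funext x
      exact dif_pos x.2
    rw [hr]
    exact g.continuous.comp (by continuity)
  have hcont' : ∀ g φ, ContinuousOn (fun τ => (Tss (t - τ) (E' g τ)) φ) (Set.Icc s t) :=
    fun g φ => aux_cont Tss hwscont hC (E' g) (hE'cont g) φ
  have hint' : ∀ g φ, IntervalIntegrable (fun τ => (Tss (t - τ) (E' g τ)) φ) volume s t := by
    intro g φ
    apply ContinuousOn.intervalIntegrable
    rw [Set.uIcc_of_le hst]
    exact hcont' g φ
  have hnormE' : ∀ (g : C(↥K, Xs →L[ℝ] ℝ)) (τ : ℝ), τ ∈ Set.Icc s t → ‖E' g τ‖ ≤ ‖g‖ := by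
    intro g τ hτ
    rw [hE'def]
    simp only [dif_pos hτ]
    exact g.norm_coe_le_norm _
  have hbd : ∀ (g : C(↥K, Xs →L[ℝ] ℝ)) (B : ℝ), (∀ τ ∈ Set.Icc s t, ‖E' g τ‖ ≤ B) →
      ∀ (φ : Xs), ∀ τ ∈ Set.Icc s t, ‖(Tss (t - τ) (E' g τ)) φ‖ ≤ C * B * ‖φ‖ := by
    intro g B hB φ τ hτ
    calc ‖(Tss (t - τ) (E' g τ)) φ‖ ≤ ‖Tss (t - τ) (E' g τ)‖ * ‖φ‖ :=
          (Tss (t - τ) (E' g τ)).le_opNorm φ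
      _ ≤ (C * B) * ‖φ‖ := by
          apply mul_le_mul_of_nonneg_right _ (norm_nonneg φ)
          calc ‖Tss (t - τ) (E' g τ)‖ ≤ ‖Tss (t - τ)‖ * ‖E' g τ‖ := (Tss (t - τ)).le_opNorm _
            _ ≤ C * B := mul_le_mul (hC τ hτ) (hB τ hτ) (norm_nonneg _) hC0
  set Φ : C(↥K, Xs →L[ℝ] ℝ) → (Xs →L[ℝ] ℝ) := fun g => LinearMap.mkContinuous
    { toFun := fun φ => ∫ τ in s..t, (Tss (t - τ) (E' g τ)) φ
      map_add' := fun φ ψ => by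
        simp only [map_add]
        exact intervalIntegral.integral_add (hint' g φ) (hint' g ψ)
      map_smul' := fun c φ => by
        simp only [_root_.map_smul, smul_eq_mul, RingHom.id_apply]
        exact intervalIntegral.integral_const_mul c _ }
    (C * ‖g‖ * (t - s))
    (fun φ => by
      have h1 : ∀ τ ∈ Set.uIoc s t, ‖(Tss (t - τ) (E' g τ)) φ‖ ≤ C * ‖g‖ * ‖φ‖ := by
        intro τ hτ
        rw [Set.uIoc_of_le hst] at hτ
        exact hbd g ‖g‖ (hnormE' g) φ τ (Set.Ioc_subset_Icc_self hτ)
      have h2 := intervalIntegral.norm_integral_le_of_norm_le_const h1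
      rw [abs_of_nonneg (sub_nonneg.2 hst)] at h2
      calc ‖∫ τ in s..t, (Tss (t - τ) (E' g τ)) φ‖ ≤ C * ‖g‖ * ‖φ‖ * (t - s) := h2
        _ = C * ‖g‖ * (t - s) * ‖φ‖ := by ring) with hΦdef
  have hΦapp : ∀ g φ, Φ g φ = ∫ τ in s..t, (Tss (t - τ) (E' g τ)) φ := fun g φ => rfl
  have hΦlip : LipschitzWith (C * (t - s)).toNNReal Φ := by
    apply LipschitzWith.of_dist_le_mul
    intro g₁ g₂
    rw [dist_eq_norm]
    have hnn : (0:ℝ) ≤ ((C * (t - s)).toNNReal : ℝ) * dist g₁ g₂ :=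
      mul_nonneg (by positivity) dist_nonneg
    apply ContinuousLinearMap.opNorm_le_bound _ hnn
    intro φ
    rw [ContinuousLinearMap.sub_apply, hΦapp, hΦapp,
      ← intervalIntegral.integral_sub (hint' g₁ φ) (hint' g₂ φ)]
    have h1 : ∀ τ ∈ Set.uIoc s t,
        ‖(Tss (t - τ) (E' g₁ τ)) φ - (Tss (t - τ) (E' g₂ τ)) φ‖ ≤ C * dist g₁ g₂ * ‖φ‖ := by
      intro τ hτ
      rw [Set.uIoc_of_le hst] at hτ
      have hτ' := Set.Ioc_subset_Icc_self hτ
      have heq : (Tss (t - τ) (E' g₁ τ)) φ - (Tss (t - τ) (E' g₂ τ)) φ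
          = (Tss (t - τ) (E' g₁ τ - E' g₂ τ)) φ := by
        rw [map_sub, ContinuousLinearMap.sub_apply]
      rw [heq]
      have hd : ‖E' g₁ τ - E' g₂ τ‖ ≤ dist g₁ g₂ := by
        rw [hE'def]
        simp only [dif_pos hτ']
        rw [← dist_eq_norm]
        exact ContinuousMap.dist_apply_le_dist _
      calc ‖(Tss (t - τ) (E' g₁ τ - E' g₂ τ)) φ‖
          ≤ ‖Tss (t - τ) (E' g₁ τ - E' g₂ τ)‖ * ‖φ‖ := ContinuousLinearMap.le_opNorm _ _
        _ ≤ (C * dist g₁ g₂) * ‖φ‖ := by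
            apply mul_le_mul_of_nonneg_right _ (norm_nonneg φ)
            calc ‖Tss (t - τ) (E' g₁ τ - E' g₂ τ)‖
                ≤ ‖Tss (t - τ)‖ * ‖E' g₁ τ - E' g₂ τ‖ := ContinuousLinearMap.le_opNorm _ _
              _ ≤ C * dist g₁ g₂ := mul_le_mul (hC τ hτ') hd (norm_nonneg _) hC0
    have h2 := intervalIntegral.norm_integral_le_of_norm_le_const h1
    rw [abs_of_nonneg (sub_nonneg.2 hst)] at h2
    have h3 : C * dist g₁ g₂ * ‖φ‖ * (t - s)
        ≤ ((C * (t - s)).toNNReal : ℝ) * dist g₁ g₂ * ‖φ‖ := by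
      have hmax : C * (t - s) ≤ ((C * (t - s)).toNNReal : ℝ) := Real.le_coe_toNNReal _
      calc C * dist g₁ g₂ * ‖φ‖ * (t - s) = (C * (t - s)) * (dist g₁ g₂ * ‖φ‖) := by ring
        _ ≤ ((C * (t - s)).toNNReal : ℝ) * (dist g₁ g₂ * ‖φ‖) :=
            mul_le_mul_of_nonneg_right hmax (mul_nonneg dist_nonneg (norm_nonneg φ))
        _ = ((C * (t - s)).toNNReal : ℝ) * dist g₁ g₂ * ‖φ‖ := by ring
    exact h2.trans h3
  have hΦcont : Continuous Φ := hΦlip.continuous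
  have hset : {f : C(↥J, Xs →L[ℝ] ℝ) | ∃ x : X, ∀ φ : Xs,
      (j x) φ = ∫ τ in s..t,
        (Tss (t - τ) (if h : τ ∈ J then f ⟨τ, h⟩ else 0)) φ}
      = (fun f : C(↥J, Xs →L[ℝ] ℝ) => Φ (f.restrict K)) ⁻¹' (Set.range j) := by
    ext f
    have hre : ∀ φ : Xs, (Φ (f.restrict K)) φ
        = ∫ τ in s..t, (Tss (t - τ) (if h : τ ∈ J then f ⟨τ, h⟩ else 0)) φ := by
      intro φ
      rw [hΦapp]
      apply intervalIntegral.integral_congr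
      intro τ hτ
      rw [Set.uIcc_of_le hst] at hτ
      simp only [hE'def]
      rw [dif_pos hτ, dif_pos (hJss hτ)]
      rfl
    constructor
    · rintro ⟨x, hx⟩
      exact ⟨x, by ext φ; rw [hre φ]; exact hx φ⟩
    · rintro ⟨x, hx⟩
      exact ⟨x, fun φ => by rw [hx, hre φ]⟩
  rw [hset]
  exact hjcl.preimage (hΦcont.comp (ContinuousMap.continuous_restrict K))


open MeasureTheory Classical in

/-- In the sun-star duality setting (`X^⊙*` realized as the dual of the
Banach space `Xs = X^⊙`, with the canonical embedding `j : X → X^⊙*` having closed range,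
and `Tss = T₀^⊙*` the sun-star adjoint semigroup), the admissible forcing class `F₀(J)`,
consisting of continuous `f : J → X^⊙*` such that the weak* integral
`∫ₛᵗ T₀^⊙*(t-τ) f(τ) dτ` lies in `jX` for all `s ≤ t` in `J`, is a closed linear
subspace of `C(J, X^⊙*)` (with the compact-open topology, i.e. uniform convergence on
compact subsets). -/
theorem admissible_forcing_class_closed_subspace
    {X Xs : Type*} [NormedAddCommGroup X] [NormedSpace ℝ X] [CompleteSpace X]
    [NormedAddCommGroup Xs] [NormedSpace ℝ Xs] [CompleteSpace Xs]
    (j : X →L[ℝ] (Xs →L[ℝ] ℝ)) (hjinj : Function.Injective j)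
    (hjcl : IsClosed (Set.range j))
    (Tss : ℝ → (Xs →L[ℝ] ℝ) →L[ℝ] (Xs →L[ℝ] ℝ))
    (hT0 : Tss 0 = 1)
    (hTsg : ∀ s t : ℝ, 0 ≤ s → 0 ≤ t → Tss (s + t) = (Tss s).comp (Tss t))
    (M ω : ℝ) (hbound : ∀ t : ℝ, 0 ≤ t → ‖Tss t‖ ≤ M * Real.exp (ω * t))
    (hwscont : ∀ (v : Xs →L[ℝ] ℝ) (φ : Xs),
      ContinuousOn (fun t => (Tss t v) φ) (Set.Ici (0:ℝ)))
    (J : Set ℝ) (hJ : J.OrdConnected) :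
    ∀ F0 : Set C(↥J, Xs →L[ℝ] ℝ),
      F0 = {f : C(↥J, Xs →L[ℝ] ℝ) |
        ∀ s ∈ J, ∀ t ∈ J, s ≤ t → ∃ x : X, ∀ φ : Xs,
          (j x) φ =
            ∫ τ in s..t,
              (Tss (t - τ) (if h : τ ∈ J then f ⟨τ, h⟩ else 0)) φ} →
      IsClosed F0 ∧ (0 : C(↥J, Xs →L[ℝ] ℝ)) ∈ F0 ∧
        (∀ f g : C(↥J, Xs →L[ℝ] ℝ), f ∈ F0 → g ∈ F0 → f + g ∈ F0) ∧
        (∀ (c : ℝ) (f : C(↥J, Xs →L[ℝ] ℝ)), f ∈ F0 → c • f ∈ F0) := by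
  intro F0 hF0
  subst hF0
  have hM : 0 ≤ M := le_trans (norm_nonneg (Tss 0)) (by simpa using hbound 0 le_rfl)
  have hCbd : ∀ s t : ℝ, s ≤ t → ∀ τ ∈ Set.Icc s t,
      ‖Tss (t - τ)‖ ≤ M * Real.exp (|ω| * (t - s)) := by
    intro s t hst τ hτ
    have h1 := hbound (t - τ) (by linarith [hτ.2])
    refine h1.trans (mul_le_mul_of_nonneg_left (Real.exp_le_exp.2 ?_) hM)
    have h2 : ω * (t - τ) ≤ |ω| * (t - τ) :=
      mul_le_mul_of_nonneg_right (le_abs_self ω) (by linarith [hτ.2])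
    have h3 : |ω| * (t - τ) ≤ |ω| * (t - s) :=
      mul_le_mul_of_nonneg_left (by linarith [hτ.1]) (abs_nonneg ω)
    linarith
  have hint : ∀ (f : C(↥J, Xs →L[ℝ] ℝ)) (s t : ℝ), s ∈ J → t ∈ J → s ≤ t → ∀ φ : Xs,
      IntervalIntegrable
        (fun τ => (Tss (t - τ) (if h : τ ∈ J then f ⟨τ, h⟩ else 0)) φ) volume s t := by
    intro f s t hs ht hst φ
    apply ContinuousOn.intervalIntegrable
    rw [Set.uIcc_of_le hst]
    have huJ : ContinuousOn (fun τ => if h : τ ∈ J then f ⟨τ, h⟩ else 0) J := by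
      rw [continuousOn_iff_continuous_restrict]
      have hr : J.domRestrict (fun τ => if h : τ ∈ J then f ⟨τ, h⟩ else 0) = f := by
        funext x
        exact dif_pos x.2
      rw [hr]
      exact f.continuous
    exact aux_cont Tss hwscont (hCbd s t hst) _ (huJ.mono (hJ.out hs ht)) φ
  refine ⟨?_, ?_, ?_, ?_⟩
  · -- closedness
    have hrw : {f : C(↥J, Xs →L[ℝ] ℝ) |
        ∀ s ∈ J, ∀ t ∈ J, s ≤ t → ∃ x : X, ∀ φ : Xs,
          (j x) φ = ∫ τ in s..t,
            (Tss (t - τ) (if h : τ ∈ J then f ⟨τ, h⟩ else 0)) φ}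
        = ⋂ (s : ℝ) (_ : s ∈ J) (t : ℝ) (_ : t ∈ J) (_ : s ≤ t),
          {f : C(↥J, Xs →L[ℝ] ℝ) | ∃ x : X, ∀ φ : Xs,
            (j x) φ = ∫ τ in s..t,
              (Tss (t - τ) (if h : τ ∈ J then f ⟨τ, h⟩ else 0)) φ} := by
      ext f
      simp only [Set.mem_iInter, Set.mem_setOf_eq]
    rw [hrw]
    refine isClosed_iInter fun s => isClosed_iInter fun hs => isClosed_iInter fun t =>
      isClosed_iInter fun ht => isClosed_iInter fun hst => ?_
    exact aux_closed j hjcl Tss hwscont hst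
      (mul_nonneg hM (Real.exp_pos _).le) (hCbd s t hst) J (hJ.out hs ht)
  · -- zero
    intro s hs t ht hst
    refine ⟨0, fun φ => ?_⟩
    have hz : ∀ τ : ℝ, (if h : τ ∈ J then (0 : C(↥J, Xs →L[ℝ] ℝ)) ⟨τ, h⟩ else 0)
        = (0 : Xs →L[ℝ] ℝ) := by
      intro τ
      split <;> rfl
    simp [hz]
  · -- add
    intro f g hf hg s hs t ht hst
    obtain ⟨x, hx⟩ := hf s hs t ht hst
    obtain ⟨y, hy⟩ := hg s hs t ht hst
    refine ⟨x + y, fun φ => ?_⟩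
    have hpt : ∀ τ : ℝ,
        (Tss (t - τ) (if h : τ ∈ J then (f + g) ⟨τ, h⟩ else 0)) φ
          = (Tss (t - τ) (if h : τ ∈ J then f ⟨τ, h⟩ else 0)) φ
            + (Tss (t - τ) (if h : τ ∈ J then g ⟨τ, h⟩ else 0)) φ := by
      intro τ
      by_cases h : τ ∈ J
      · simp [h]
      · simp [h]
    calc (j (x + y)) φ = (j x) φ + (j y) φ := by rw [map_add]; rfl
      _ = (∫ τ in s..t, (Tss (t - τ) (if h : τ ∈ J then f ⟨τ, h⟩ else 0)) φ)
          + ∫ τ in s..t, (Tss (t - τ) (if h : τ ∈ J then g ⟨τ, h⟩ else 0)) φ := by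
          rw [hx φ, hy φ]
      _ = ∫ τ in s..t, ((Tss (t - τ) (if h : τ ∈ J then f ⟨τ, h⟩ else 0)) φ
          + (Tss (t - τ) (if h : τ ∈ J then g ⟨τ, h⟩ else 0)) φ) :=
          (intervalIntegral.integral_add (hint f s t hs ht hst φ)
            (hint g s t hs ht hst φ)).symm
      _ = ∫ τ in s..t, (Tss (t - τ) (if h : τ ∈ J then (f + g) ⟨τ, h⟩ else 0)) φ := by
          apply intervalIntegral.integral_congr
          intro τ _
          exact (hpt τ).symm
  · -- smul
    intro c f hf s hs t ht hst
    obtain ⟨x, hx⟩ := hf s hs t ht hst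
    refine ⟨c • x, fun φ => ?_⟩
    have hpt : ∀ τ : ℝ,
        (Tss (t - τ) (if h : τ ∈ J then (c • f) ⟨τ, h⟩ else 0)) φ
          = c * (Tss (t - τ) (if h : τ ∈ J then f ⟨τ, h⟩ else 0)) φ := by
      intro τ
      by_cases h : τ ∈ J
      · simp [h]
      · simp [h]
    calc (j (c • x)) φ = c * (j x) φ := by rw [_root_.map_smul]; rfl
      _ = c * ∫ τ in s..t, (Tss (t - τ) (if h : τ ∈ J then f ⟨τ, h⟩ else 0)) φ := by
          rw [hx φ]
      _ = ∫ τ in s..t, c * (Tss (t - τ) (if h : τ ∈ J then f ⟨τ, h⟩ else 0)) φ :=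
          (intervalIntegral.integral_const_mul c _).symm
      _ = ∫ τ in s..t, (Tss (t - τ) (if h : τ ∈ J then (c • f) ⟨τ, h⟩ else 0)) φ := by
          apply intervalIntegral.integral_congr
          intro τ _
          exact (hpt τ).symm
end

section
/- The range jX of the canonical embedding is an admissible range for T₀: for every continuous function f : ℝ → jX and all s ≤ t, the weak* Riemann integral ∫ₛᵗ T₀^⊙*(t − τ) f(τ) dτ belongs to jX. -/
set_option maxHeartbeats 1000000
set_option synthInstance.maxHeartbeats 400000


open MeasureTheory

/-- `jX` is an admissible range for `T₀`: in the sun-star duality setting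
(with `X^⊙*` realized as the dual of `Xs = X^⊙`, `j : X → X^⊙*` the canonical embedding
with closed range satisfying `T₀^⊙*(t) ∘ j = j ∘ T₀(t)` for `t ≥ 0`), for every
continuous `f : ℝ → X^⊙*` taking values in `jX` and all `s ≤ t`, the weak* Riemann
integral `∫ₛᵗ T₀^⊙*(t-τ) f(τ) dτ` belongs to `jX`. -/
theorem jX_is_admissible_range
    {X Xs : Type*} [NormedAddCommGroup X] [NormedSpace ℝ X] [CompleteSpace X]
    [NormedAddCommGroup Xs] [NormedSpace ℝ Xs] [CompleteSpace Xs]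
    (j : X →L[ℝ] (Xs →L[ℝ] ℝ)) (hjinj : Function.Injective j)
    (hjcl : IsClosed (Set.range j))
    (T0 : ℝ → X →L[ℝ] X)
    (Tss : ℝ → (Xs →L[ℝ] ℝ) →L[ℝ] (Xs →L[ℝ] ℝ))
    (hT00 : T0 0 = 1)
    (hT0sg : ∀ s t : ℝ, 0 ≤ s → 0 ≤ t → T0 (s + t) = (T0 s).comp (T0 t))
    (hT0cont : ∀ x : X, ContinuousOn (fun t => T0 t x) (Set.Ici (0:ℝ)))
    (hintertwine : ∀ t : ℝ, 0 ≤ t → ∀ x : X, Tss t (j x) = j (T0 t x))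
    (f : ℝ → (Xs →L[ℝ] ℝ)) (hfc : Continuous f) (hfr : ∀ τ : ℝ, f τ ∈ Set.range j) :
    ∀ s t : ℝ, s ≤ t → ∃ x : X, ∀ φ : Xs,
      (j x) φ = ∫ τ in s..t, (Tss (t - τ) (f τ)) φ := by
  intro s t hst
  -- the range of `j` as a closed submodule
  set R : Submodule ℝ (Xs →L[ℝ] ℝ) := LinearMap.range (j : X →ₗ[ℝ] (Xs →L[ℝ] ℝ)) with hR
  have hRcl : IsClosed (R : Set (Xs →L[ℝ] ℝ)) := by
    simpa [hR, LinearMap.coe_range] using hjcl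
  haveI : CompleteSpace R := hRcl.completeSpace_coe
  have hmem : ∀ x : X, j x ∈ R := fun x => LinearMap.mem_range_self _ x
  -- `j` as a continuous linear equivalence onto its range
  let jc : X →L[ℝ] R := j.codRestrict R hmem
  have hker : jc.ker = ⊥ := by
    apply LinearMap.ker_eq_bot_of_injective
    intro a b hab
    apply hjinj
    exact congrArg Subtype.val hab
  have hrange : jc.range = ⊤ := by
    rw [LinearMap.range_eq_top]
    rintro ⟨y, hy⟩
    obtain ⟨x, hx⟩ := hy
    exact ⟨x, Subtype.ext hx⟩
  let e : X ≃L[ℝ] R := ContinuousLinearEquiv.ofBijective (𝕜 := ℝ) (𝕜' := ℝ) (σ := RingHom.id ℝ) (σ' := RingHom.id ℝ) (E := X) (F := R) jc hker hrange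
  -- lift `f` to `g : ℝ → X`
  let g : ℝ → X := fun τ => e.symm ⟨f τ, by simpa [hR, LinearMap.coe_range] using hfr τ⟩
  have hjg : ∀ τ, j (g τ) = f τ := by
    intro τ
    have h1 := e.apply_symm_apply ⟨f τ, by simpa [hR, LinearMap.coe_range] using hfr τ⟩
    have h2 : (e (g τ) : Xs →L[ℝ] ℝ) = j (g τ) := rfl
    rw [show g τ = e.symm ⟨f τ, by simpa [hR, LinearMap.coe_range] using hfr τ⟩ from rfl] at h2
    rw [h1] at h2
    exact h2.symm
  have hgc : Continuous g := by
    apply e.symm.continuous.comp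
    exact Continuous.subtype_mk hfc _
  -- uniform bound on `‖T0 r‖` for `r ∈ [0, t - s]`
  set K : Set ℝ := Set.Icc (0:ℝ) (t - s) with hK
  obtain ⟨C, hC⟩ : ∃ C, ∀ r : K, ‖T0 r.1‖ ≤ C := by
    apply banach_steinhaus
    intro x
    obtain ⟨C, hCb⟩ := (isCompact_Icc.exists_bound_of_continuousOn
      ((hT0cont x).mono (by intro r hr; exact hr.1)))
    exact ⟨C, fun r => hCb r.1 r.2⟩
  -- the integrand in `X`
  set h : ℝ → X := fun τ => T0 (t - τ) (g τ) with hh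
  -- continuity of the integrand on `[s, t]`
  have hhc : ContinuousOn h (Set.Icc s t) := by
    intro τ₀ hτ₀
    have hmaps : Set.MapsTo (fun τ : ℝ => t - τ) (Set.Icc s t) (Set.Ici (0:ℝ)) := by
      intro τ hτ; simp only [Set.mem_Ici]; linarith [hτ.2]
    have hsubt : Filter.Tendsto (fun τ : ℝ => t - τ) (nhdsWithin τ₀ (Set.Icc s t))
        (nhdsWithin (t - τ₀) (Set.Ici (0:ℝ))) := by
      exact ((continuous_const.sub continuous_id).continuousWithinAt).tendsto_nhdsWithin hmaps
    -- second part: `τ ↦ T0 (t-τ) (g τ₀)` tendsto `T0 (t-τ₀) (g τ₀)`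
    have h2 : Filter.Tendsto (fun τ => T0 (t - τ) (g τ₀)) (nhdsWithin τ₀ (Set.Icc s t))
        (nhds (T0 (t - τ₀) (g τ₀))) :=
      Filter.Tendsto.comp ((hT0cont (g τ₀)) (t - τ₀) (hmaps hτ₀)) hsubt
    -- first part: `τ ↦ T0 (t-τ) (g τ - g τ₀)` tendsto `0`
    have h1 : Filter.Tendsto (fun τ => T0 (t - τ) (g τ - g τ₀)) (nhdsWithin τ₀ (Set.Icc s t))
        (nhds 0) := by
      apply squeeze_zero_norm' (a := fun τ => C * ‖g τ - g τ₀‖)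
      · filter_upwards [self_mem_nhdsWithin] with τ hτ
        have hrK : (t - τ) ∈ K := ⟨by linarith [hτ.2], by linarith [hτ.1]⟩
        calc ‖T0 (t - τ) (g τ - g τ₀)‖ ≤ ‖T0 (t - τ)‖ * ‖g τ - g τ₀‖ :=
              (T0 (t - τ)).le_opNorm _
          _ ≤ C * ‖g τ - g τ₀‖ := by
              apply mul_le_mul_of_nonneg_right (hC ⟨_, hrK⟩) (norm_nonneg _)
      · have : Filter.Tendsto (fun τ => ‖g τ - g τ₀‖) (nhdsWithin τ₀ (Set.Icc s t)) (nhds 0) := by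
          have := ((hgc.tendsto τ₀).mono_left (nhdsWithin_le_nhds (s := Set.Icc s t)))
          have h' : Filter.Tendsto (fun τ => g τ - g τ₀) (nhdsWithin τ₀ (Set.Icc s t))
              (nhds 0) := by
            simpa using this.sub (tendsto_const_nhds (x := g τ₀))
          simpa using h'.norm
        simpa using this.const_mul C
    have : Filter.Tendsto (fun τ => T0 (t - τ) (g τ - g τ₀) + T0 (t - τ) (g τ₀))
        (nhdsWithin τ₀ (Set.Icc s t)) (nhds (0 + T0 (t - τ₀) (g τ₀))) := h1.add h2
    simp only [zero_add] at this
    have heq : (fun τ => T0 (t - τ) (g τ - g τ₀) + T0 (t - τ) (g τ₀)) = h := by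
      funext τ; simp [hh, map_sub]
    rw [heq] at this
    exact this
  have hint : IntervalIntegrable h volume s t := by
    apply ContinuousOn.intervalIntegrable
    rwa [Set.uIcc_of_le hst]
  refine ⟨∫ τ in s..t, h τ, ?_⟩
  intro φ
  -- evaluation functional `x ↦ (j x) φ`
  let L : X →L[ℝ] ℝ := (ContinuousLinearMap.apply ℝ ℝ φ).comp j
  have hL : ∀ x : X, L x = (j x) φ := fun x => rfl
  have := (L.intervalIntegral_comp_comm hint).symm
  rw [hL] at this
  rw [this]
  apply intervalIntegral.integral_congr
  intro τ hτ
  rw [Set.uIcc_of_le hst] at hτ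
  have h0 : 0 ≤ t - τ := by linarith [hτ.2]
  simp only [hL, hh]
  rw [← hjg τ, hintertwine (t - τ) h0 (g τ)]
end
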